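/- A permutation σ of size n is a minimal permutation with d descents if and only if desc(σ) = d and every ascent of σ at position i (i.e., σ_i < σ_{i+1}) satisfies 2 ≤ i ≤ n−2 and the four consecutive elements σ_{i−1} σ_i σ_{i+1} σ_{i+2} form an occurrence of either the pattern 2143 or the pattern 3142 (i.e., σ_{i−1} > σ_i, σ_i < σ_{i+1}, σ_{i+1} > σ_{i+2}, σ_{i−1} < σ_{i+1}, and σ_i < σ_{i+2}). -/

import Mathlib

/-- `σ` has a descent at (0-based) position `i`, i.e. `σ i > σ (i+1)`. -/
def IsDescentAt {n : ℕ} (σ : Equiv.Perm (Fin n)) (i : ℕ) : Prop :=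
  ∃ h : i + 1 < n, σ ⟨i + 1, h⟩ < σ ⟨i, Nat.lt_of_succ_lt h⟩

/-- The number of descents of `σ`. -/
noncomputable def descNum {n : ℕ} (σ : Equiv.Perm (Fin n)) : ℕ :=
  {i : ℕ | IsDescentAt σ i}.ncard

/-- `π` is a pattern of `σ` (written `π ≺ σ`). -/
def IsPattern {k n : ℕ} (π : Equiv.Perm (Fin k)) (σ : Equiv.Perm (Fin n)) : Prop :=
  ∃ f : Fin k ↪o Fin n, ∀ ℓ m : Fin k, π ℓ < π m → σ (f ℓ) < σ (f m)

/-- `σ` is a minimal permutation with `d` descents: it has `d` descents and every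
pattern `π ≺ σ` with `π ≠ σ` (equivalently, of strictly smaller size) has fewer
than `d` descents. -/
def MinimalWithDescents (d : ℕ) {n : ℕ} (σ : Equiv.Perm (Fin n)) : Prop :=
  descNum σ = d ∧
    ∀ (k : ℕ) (π : Equiv.Perm (Fin k)), k < n → IsPattern π σ → descNum π < d



def del {m : ℕ} (σ : Equiv.Perm (Fin (m+1))) (p : Fin (m+1)) : Equiv.Perm (Fin m) :=
  Equiv.removeNone (((finSuccEquiv' p).symm.trans σ).trans (finSuccEquiv' (σ p)))

lemma del_key {m : ℕ} (σ : Equiv.Perm (Fin (m+1))) (p : Fin (m+1)) (j : Fin m) :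
    (σ p).succAbove (del σ p j) = σ (p.succAbove j) := by
  obtain ⟨z, hz⟩ := Fin.exists_succAbove_eq (σ.injective.ne (Fin.succAbove_ne p j))
  have he : (((finSuccEquiv' p).symm.trans σ).trans (finSuccEquiv' (σ p))) (some j)
      = some z := by
    simp only [Equiv.trans_apply, finSuccEquiv'_symm_some]
    rw [← hz, finSuccEquiv'_succAbove]
  have h := Equiv.removeNone_some _ ⟨z, he⟩
  rw [he] at h
  have : del σ p j = z := Option.some_injective _ h
  rw [this, hz]

lemma del_lt_iff {m : ℕ} (σ : Equiv.Perm (Fin (m+1))) (p : Fin (m+1)) (j j' : Fin m) :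
    del σ p j < del σ p j' ↔ σ (p.succAbove j) < σ (p.succAbove j') := by
  rw [← del_key, ← del_key, Fin.succAbove_lt_succAbove_iff]

lemma succAbove_val {m : ℕ} (p : Fin (m+1)) (j : Fin m) :
    (p.succAbove j).val = if j.val < p.val then j.val else j.val + 1 := by
  rw [Fin.succAbove]
  split_ifs with h1 h2 h2 <;> simp_all [Fin.lt_def, Fin.castSucc, Fin.succ] <;> omega


lemma succAbove_mk_lt {m : ℕ} (p : Fin (m+1)) (j : ℕ) (hj : j < m) (h : j < p.val) :
    p.succAbove ⟨j, hj⟩ = ⟨j, Nat.lt_succ_of_lt hj⟩ := by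
  apply Fin.ext; rw [succAbove_val]; simp [h]

lemma succAbove_mk_ge {m : ℕ} (p : Fin (m+1)) (j : ℕ) (hj : j < m) (h : p.val ≤ j) :
    p.succAbove ⟨j, hj⟩ = ⟨j + 1, Nat.succ_lt_succ hj⟩ := by
  apply Fin.ext; rw [succAbove_val]; simp [Nat.not_lt.2 h]

lemma descentAt_del_iff {m : ℕ} (σ : Equiv.Perm (Fin (m+1))) (p : Fin (m+1)) (j : ℕ)
    (hj : j + 1 < m) :
    IsDescentAt (del σ p) j ↔
      σ (p.succAbove ⟨j+1, hj⟩) < σ (p.succAbove ⟨j, Nat.lt_of_succ_lt hj⟩) := by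
  constructor
  · rintro ⟨h, hlt⟩
    rwa [del_lt_iff] at hlt
  · intro h
    exact ⟨hj, (del_lt_iff σ p _ _).2 h⟩

lemma D1 {m : ℕ} (σ : Equiv.Perm (Fin (m+1))) (p : Fin (m+1)) (j : ℕ)
    (hj : j + 1 < m) (hp : j + 1 < p.val) :
    IsDescentAt (del σ p) j ↔ IsDescentAt σ j := by
  rw [descentAt_del_iff σ p j hj, succAbove_mk_lt p (j+1) hj hp,
    succAbove_mk_lt p j _ (by omega)]
  constructor
  · intro h; exact ⟨by omega, h⟩
  · rintro ⟨h, hlt⟩; exact hlt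

lemma D2 {m : ℕ} (σ : Equiv.Perm (Fin (m+1))) (p : Fin (m+1)) (j : ℕ)
    (hj : j + 1 < m) (hp : p.val ≤ j) :
    IsDescentAt (del σ p) j ↔ IsDescentAt σ (j+1) := by
  rw [descentAt_del_iff σ p j hj, succAbove_mk_ge p (j+1) hj (by omega),
    succAbove_mk_ge p j _ hp]
  constructor
  · intro h; exact ⟨by omega, h⟩
  · rintro ⟨h, hlt⟩; exact hlt

lemma D3 {m : ℕ} (σ : Equiv.Perm (Fin (m+1))) (p : Fin (m+1))
    (h1 : 1 ≤ p.val) (h2 : p.val < m) :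
    IsDescentAt (del σ p) (p.val - 1) ↔
      σ ⟨p.val + 1, by omega⟩ < σ ⟨p.val - 1, by omega⟩ := by
  rw [descentAt_del_iff σ p (p.val - 1) (by omega)]
  have e1 : p.val - 1 + 1 = p.val := by omega
  have h3 : p.val ≤ p.val - 1 + 1 := by omega
  rw [succAbove_mk_ge p (p.val - 1 + 1) (by omega) h3,
    succAbove_mk_lt p (p.val - 1) (by omega) (by omega)]
  constructor <;> intro h <;> convert h using 3 <;> omega

lemma descSet_finite {n : ℕ} (σ : Equiv.Perm (Fin n)) : {i : ℕ | IsDescentAt σ i}.Finite := by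
  apply (Set.finite_lt_nat n).subset
  rintro i ⟨h, -⟩; exact Nat.lt_of_succ_lt h


/-- dichotomy: a valid position is an ascent or descent -/
lemma ascent_of_not_descent {n : ℕ} (σ : Equiv.Perm (Fin n)) (i : ℕ) (hi : i + 1 < n)
    (h : ¬ IsDescentAt σ i) : σ ⟨i, Nat.lt_of_succ_lt hi⟩ < σ ⟨i+1, hi⟩ := by
  have hne : σ ⟨i, Nat.lt_of_succ_lt hi⟩ ≠ σ ⟨i+1, hi⟩ :=
    σ.injective.ne (by simp [Fin.ext_iff])
  rcases lt_or_gt_of_ne hne with h' | h'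
  · exact h'
  · exact absurd ⟨hi, h'⟩ h

lemma not_descent_of_ascent {n : ℕ} (σ : Equiv.Perm (Fin n)) (i : ℕ) (hi : i + 1 < n)
    (h : σ ⟨i, Nat.lt_of_succ_lt hi⟩ < σ ⟨i+1, hi⟩) : ¬ IsDescentAt σ i := by
  rintro ⟨h', hlt⟩
  exact absurd h (not_lt.2 (le_of_lt hlt))

/-- between a descent of values there is a descent position -/
lemma exists_descent_between_aux {n : ℕ} (σ : Equiv.Perm (Fin n)) :
    ∀ (k a : ℕ) (hb : a + k + 1 < n),
      σ ⟨a + k + 1, hb⟩ < σ ⟨a, by omega⟩ →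
      ∃ i, a ≤ i ∧ i + 1 ≤ a + k + 1 ∧ IsDescentAt σ i := by
  intro k
  induction k with
  | zero => intro a hb h; exact ⟨a, le_refl _, by omega, hb, h⟩
  | succ k ih =>
    intro a hb h
    by_cases hd : IsDescentAt σ a
    · exact ⟨a, le_refl _, by omega, hd⟩
    · have ha : σ ⟨a, by omega⟩ < σ ⟨a+1, by omega⟩ :=
        ascent_of_not_descent σ a (by omega) hd
      have hb' : (a + 1) + k + 1 < n := by omega
      have h' : σ ⟨(a+1) + k + 1, hb'⟩ < σ ⟨a+1, by omega⟩ := by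
        refine lt_trans ?_ ha
        rw [show (⟨(a+1)+k+1, hb'⟩ : Fin n) = ⟨a + (k+1) + 1, hb⟩ from Fin.ext (by simp; omega)]; exact h
      obtain ⟨i, hi1, hi2, hi3⟩ := ih (a+1) hb' h'
      exact ⟨i, by omega, by omega, hi3⟩

lemma exists_descent_between {n : ℕ} (σ : Equiv.Perm (Fin n)) (a b : Fin n)
    (hab : a < b) (h : σ b < σ a) :
    ∃ i, a.val ≤ i ∧ i + 1 ≤ b.val ∧ IsDescentAt σ i := by
  have hab' : a.val < b.val := hab
  have hk : a.val + (b.val - a.val - 1) + 1 = b.val := by omega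
  obtain ⟨i, h1, h2, h3⟩ := exists_descent_between_aux σ (b.val - a.val - 1) a.val
    (by omega) (by
      have e1 : (⟨a.val + (b.val - a.val - 1) + 1, by omega⟩ : Fin n) = b :=
        Fin.ext (by simp; omega)
      have e2 : (⟨a.val, by omega⟩ : Fin n) = a := Fin.ext rfl
      rw [e1, e2]; exact h)
  exact ⟨i, h1, by omega, h3⟩


lemma pattern_desc_le {k n : ℕ} (π : Equiv.Perm (Fin k)) (σ : Equiv.Perm (Fin n))
    (hp : IsPattern π σ) : descNum π ≤ descNum σ := by
  classical
  obtain ⟨f, hf⟩ := hp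
  have spec : ∀ j : ℕ, ∃ i : ℕ, IsDescentAt π j →
      (IsDescentAt σ i ∧ ∀ hj : j + 1 < k,
        (f ⟨j, Nat.lt_of_succ_lt hj⟩).val ≤ i ∧ i + 1 ≤ (f ⟨j + 1, hj⟩).val) := by
    intro j
    by_cases h : IsDescentAt π j
    · obtain ⟨hj, hlt⟩ := h
      have hflt : f ⟨j, Nat.lt_of_succ_lt hj⟩ < f ⟨j+1, hj⟩ :=
        f.strictMono (by simp [Fin.lt_def])
      have hval : σ (f ⟨j+1, hj⟩) < σ (f ⟨j, Nat.lt_of_succ_lt hj⟩) := hf _ _ hlt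
      obtain ⟨i, hi1, hi2, hi3⟩ := exists_descent_between σ _ _ hflt hval
      refine ⟨i, fun _ => ⟨hi3, fun hj' => ⟨?_, ?_⟩⟩⟩
      · convert hi1 using 3
      · convert hi2 using 3
    · exact ⟨0, fun h' => absurd h' h⟩
  choose F hF using spec
  refine Set.ncard_le_ncard_of_injOn F ?_ ?_ (descSet_finite σ)
  · intro j hj
    exact (hF j hj).1
  · intro j hj j' hj' heq
    by_contra hne
    have key : ∀ a b : ℕ, IsDescentAt π a → IsDescentAt π b → a < b → F a < F b := by
      intro a b ha hb hab
      obtain ⟨ha', -⟩ := id ha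
      obtain ⟨hb', -⟩ := id hb
      have h1 := (hF a ha).2 ha'
      have h2 := (hF b hb).2 hb'
      have hmono : (f ⟨a+1, ha'⟩).val ≤ (f ⟨b, Nat.lt_of_succ_lt hb'⟩).val := by
        have : (⟨a+1, ha'⟩ : Fin k) ≤ ⟨b, Nat.lt_of_succ_lt hb'⟩ := by
          simp [Fin.le_def]; omega
        exact f.monotone this
      omega
    rcases lt_or_gt_of_ne hne with h' | h'
    · exact absurd heq (ne_of_lt (key _ _ hj hj' h'))
    · exact absurd heq.symm (ne_of_lt (key _ _ hj' hj h'))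

lemma del_isPattern {m : ℕ} (σ : Equiv.Perm (Fin (m+1))) (p : Fin (m+1)) :
    IsPattern (del σ p) σ := by
  refine ⟨Fin.succAboveOrderEmb p, ?_⟩
  intro ℓ l hlt
  show σ (p.succAbove ℓ) < σ (p.succAbove l)
  rw [← del_key σ p ℓ, ← del_key σ p l]
  exact Fin.succAbove_lt_succAbove_iff.mpr hlt

lemma pattern_factor {k m : ℕ} (π : Equiv.Perm (Fin k)) (σ : Equiv.Perm (Fin (m+1)))
    (hk : k < m + 1) (hp : IsPattern π σ) : ∃ p, IsPattern π (del σ p) := by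
  classical
  obtain ⟨f, hf⟩ := hp
  have hns : ∃ p : Fin (m+1), ∀ ℓ, f ℓ ≠ p := by
    by_contra hc
    push_neg at hc
    have hsurj : Function.Surjective f := fun p => hc p
    have := Fintype.card_le_of_surjective f hsurj
    simp at this; omega
  obtain ⟨p, hpne⟩ := hns
  have hg : ∀ ℓ : Fin k, ∃ j : Fin m, p.succAbove j = f ℓ := fun ℓ =>
    Fin.exists_succAbove_eq (hpne ℓ)
  choose g hgspec using hg
  have hgmono : StrictMono g := by
    intro a b hab
    have : p.succAbove (g a) < p.succAbove (g b) := by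
      rw [hgspec, hgspec]; exact f.strictMono hab
    exact Fin.succAbove_lt_succAbove_iff.mp this
  refine ⟨p, OrderEmbedding.ofStrictMono g hgmono, ?_⟩
  intro ℓ l hlt
  show del σ p (g ℓ) < del σ p (g l)
  rw [del_lt_iff, hgspec, hgspec]
  exact hf _ _ hlt

lemma LB {m : ℕ} (σ : Equiv.Perm (Fin (m+1))) (p : Fin (m+1))
    (hnot : ¬ (IsDescentAt σ (p.val - 1) ∧ IsDescentAt σ p.val))
    (hkey : (IsDescentAt σ (p.val - 1) ∨ IsDescentAt σ p.val) → 1 ≤ p.val →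
      ∃ h : p.val < m, σ ⟨p.val + 1, Nat.succ_lt_succ h⟩ <
        σ ⟨p.val - 1, by omega⟩) :
    descNum σ ≤ descNum (del σ p) := by
  classical
  refine Set.ncard_le_ncard_of_injOn (fun j => if j < p.val then j else j - 1)
    ?_ ?_ (descSet_finite (del σ p))
  · intro j hj
    have hjm : j + 1 < m + 1 := hj.choose
    simp only [Set.mem_setOf_eq]
    rcases lt_trichotomy (j+1) p.val with hc | hc | hc
    · rw [if_pos (by omega)]
      exact (D1 σ p j (by omega) hc).2 hj
    · -- j = p.val - 1
      have hp1 : 1 ≤ p.val := by omega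
      obtain ⟨hpm, hval⟩ := hkey (Or.inl (by rw [show p.val - 1 = j by omega]; exact hj)) hp1
      rw [if_pos (by omega), show j = p.val - 1 by omega]
      exact (D3 σ p hp1 (by omega)).2 hval
    · -- j ≥ p.val
      rcases Nat.eq_or_lt_of_le (show p.val ≤ j by omega) with hc2 | hc2
      · -- j = p.val
        have hp1 : 1 ≤ p.val := by
          by_contra h
          have hp0 : p.val = 0 := by omega
          have hj0 : IsDescentAt σ 0 := by rw [← hp0, hc2]; exact hj
          exact hnot ⟨by rw [hp0]; exact hj0, by rw [hp0]; exact hj0⟩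
        obtain ⟨hpm, hval⟩ := hkey (Or.inr (hc2 ▸ hj)) hp1
        rw [if_neg (by omega), show j - 1 = p.val - 1 by omega]
        exact (D3 σ p hp1 (by omega)).2 hval
      · -- j > p.val
        rw [if_neg (by omega)]
        have := (D2 σ p (j-1) (by omega) (by omega)).2
        rw [show j - 1 + 1 = j by omega] at this
        exact this hj
  · intro j hj j' hj' heq
    simp only at heq
    by_contra hne
    split_ifs at heq with h1 h2 h2
    · exact hne heq
    · -- j < p, j' ≥ p : j = j' - 1 so j' = p, j = p - 1
      have hj'p : j' = p.val := by omega
      have hjp : j = p.val - 1 := by omega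
      exact hnot ⟨hjp ▸ hj, hj'p ▸ hj'⟩
    · have hjp : j = p.val := by omega
      have hj'p : j' = p.val - 1 := by omega
      exact hnot ⟨hj'p ▸ hj', hjp ▸ hj⟩
    · -- both ≥ p: j - 1 = j' - 1, j ≠ j' → {j,j'} = {0,1}, p = 0
      have hp0 : p.val = 0 := by omega
      have h0 : j = 0 ∨ j' = 0 := by omega
      have hd0 : IsDescentAt σ 0 := by
        rcases h0 with h | h
        · exact h ▸ hj
        · exact h ▸ hj'
      exact hnot ⟨by rw [hp0]; exact hd0, by rw [hp0]; exact hd0⟩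

lemma card_lt_of_missing {m d : ℕ} (σ : Equiv.Perm (Fin (m+1))) (p : Fin (m+1)) (x : ℕ)
    (hd : 1 ≤ d) (hdn : descNum σ = d) (hx : IsDescentAt σ x)
    (hmap : ∀ j, IsDescentAt (del σ p) j →
      IsDescentAt σ (if j < p.val then j else j + 1) ∧ (if j < p.val then j else j + 1) ≠ x) :
    descNum (del σ p) < d := by
  classical
  have hle : descNum (del σ p) ≤ ({i : ℕ | IsDescentAt σ i} \ {x}).ncard := by
    refine Set.ncard_le_ncard_of_injOn (fun j => if j < p.val then j else j + 1)
      ?_ ?_ ((descSet_finite σ).diff)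
    · intro j hj
      exact ⟨(hmap j hj).1, by simpa using (hmap j hj).2⟩
    · intro j hj j' hj' heq
      simp only at heq
      split_ifs at heq <;> omega
  rw [Set.ncard_diff_singleton_of_mem (show x ∈ {i : ℕ | IsDescentAt σ i} from hx)] at hle
  have : descNum σ = d := hdn
  unfold descNum at this
  omega

lemma UB {m d : ℕ} (σ : Equiv.Perm (Fin (m+1))) (hd : 1 ≤ d) (hdn : descNum σ = d)
    (hcond : ∀ (i : ℕ) (hi : i + 1 < m + 1),
      σ ⟨i, Nat.lt_of_succ_lt hi⟩ < σ ⟨i + 1, hi⟩ →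
      ∃ (h1 : 1 ≤ i) (h2 : i + 2 < m + 1),
        σ ⟨i, Nat.lt_of_succ_lt hi⟩ < σ ⟨i - 1, by omega⟩ ∧
        σ ⟨i + 2, h2⟩ < σ ⟨i + 1, hi⟩ ∧
        σ ⟨i - 1, by omega⟩ < σ ⟨i + 1, hi⟩ ∧
        σ ⟨i, Nat.lt_of_succ_lt hi⟩ < σ ⟨i + 2, h2⟩)
    (p : Fin (m+1)) : descNum (del σ p) < d := by
  classical
  have hne : {i : ℕ | IsDescentAt σ i}.Nonempty := by
    apply Set.nonempty_of_ncard_ne_zero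
    unfold descNum at hdn
    omega
  obtain ⟨j0, hj0⟩ := hne
  have hm : 1 ≤ m := by
    have := (show IsDescentAt σ j0 from hj0).choose
    omega
  have fact0 : IsDescentAt σ 0 := by
    by_contra h
    obtain ⟨h1, -⟩ := hcond 0 (by omega) (ascent_of_not_descent σ 0 (by omega) h)
    omega
  have factLast : IsDescentAt σ (m - 1) := by
    by_contra h
    obtain ⟨h1, h2, -⟩ := hcond (m-1) (by omega)
      (ascent_of_not_descent σ (m-1) (by omega) h)
    omega
  have factNoDouble : ∀ q, q + 1 < m + 1 → ¬ IsDescentAt σ q → IsDescentAt σ (q + 1) := by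
    intro q hq h
    obtain ⟨h1, h2, c1, c2, c3, c4⟩ := hcond q hq (ascent_of_not_descent σ q hq h)
    exact ⟨h2, c2⟩
  by_cases hp0 : p.val = 0
  · apply card_lt_of_missing σ p 0 hd hdn fact0
    intro j hj
    have hjm : j + 1 < m := hj.choose
    rw [if_neg (by omega)]
    exact ⟨(D2 σ p j hjm (by omega)).1 hj, by omega⟩
  by_cases hpm : p.val = m
  · apply card_lt_of_missing σ p (m-1) hd hdn factLast
    intro j hj
    have hjm : j + 1 < m := hj.choose
    rw [if_pos (by omega)]
    exact ⟨(D1 σ p j hjm (by omega)).1 hj, by omega⟩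
  have hp1 : 1 ≤ p.val := by omega
  have hpm' : p.val < m := by
    have := p.isLt
    omega
  by_cases hboth : IsDescentAt σ (p.val - 1) ∧ IsDescentAt σ p.val
  · apply card_lt_of_missing σ p p.val hd hdn hboth.2
    intro j hj
    have hjm : j + 1 < m := hj.choose
    rcases lt_trichotomy (j+1) p.val with hc | hc | hc
    · rw [if_pos (by omega)]
      exact ⟨(D1 σ p j hjm hc).1 hj, by omega⟩
    · rw [if_pos (by omega)]
      refine ⟨?_, by omega⟩
      rw [show j = p.val - 1 by omega]
      exact hboth.1
    · rw [if_neg (by omega)]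
      exact ⟨(D2 σ p j hjm (by omega)).1 hj, by omega⟩
  · have hone : IsDescentAt σ (p.val - 1) ∨ IsDescentAt σ p.val := by
      by_contra h
      push_neg at h
      refine h.2 ?_
      have := factNoDouble (p.val - 1) (by omega) h.1
      rwa [show p.val - 1 + 1 = p.val by omega] at this
    set x := if IsDescentAt σ (p.val - 1) then p.val - 1 else p.val with hxdef
    have hx : IsDescentAt σ x := by
      rw [hxdef]
      split_ifs with h
      · exact h
      · tauto
    have hnotau : ¬ IsDescentAt (del σ p) (p.val - 1) := by
      intro h
      have hval := (D3 σ p hp1 hpm').1 h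
      by_cases hD : IsDescentAt σ (p.val - 1)
      · have hnDp : ¬ IsDescentAt σ p.val := fun h' => hboth ⟨hD, h'⟩
        obtain ⟨h1, h2, c1, c2, c3, c4⟩ := hcond p.val (by omega)
          (ascent_of_not_descent σ p.val (by omega) hnDp)
        exact absurd c3 (not_lt.2 hval.le)
      · obtain ⟨h1, h2, c1, c2, c3, c4⟩ := hcond (p.val - 1) (by omega)
          (ascent_of_not_descent σ (p.val - 1) (by omega) hD)
        have hlt : σ ⟨p.val - 1, by omega⟩ < σ ⟨p.val + 1, by omega⟩ := by
          convert c4 using 3 <;> omega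
        exact absurd hlt (not_lt.2 hval.le)
    apply card_lt_of_missing σ p x hd hdn hx
    intro j hj
    have hjm : j + 1 < m := hj.choose
    rcases lt_trichotomy (j+1) p.val with hc | hc | hc
    · rw [if_pos (by omega)]
      refine ⟨(D1 σ p j hjm hc).1 hj, ?_⟩
      have : p.val - 1 ≤ x := by rw [hxdef]; split_ifs <;> omega
      omega
    · have hje : j = p.val - 1 := by omega
      rw [hje] at hj
      exact absurd hj hnotau
    · rw [if_neg (by omega)]
      refine ⟨(D2 σ p j hjm (by omega)).1 hj, ?_⟩
      have : x ≤ p.val := by rw [hxdef]; split_ifs <;> omega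
      omega

set_option maxHeartbeats 1000000 in
/-- Characterization of minimal permutations with `d` descents (`d ≥ 1`): `σ` is minimal
with `d` descents iff it has exactly `d` descents and around every ascent (0-based
position `i`, so `1 ≤ i` and `i + 2 < n` is the paper's `2 ≤ i ≤ n - 2`), the four
consecutive elements `σ (i-1) σ i σ (i+1) σ (i+2)` form an occurrence of `2143` or
`3142`, i.e. satisfy the five inequalities below. -/
theorem minimal_iff_ascents_form_2143_or_3142 {n d : ℕ} (hd : 1 ≤ d)
    (σ : Equiv.Perm (Fin n)) :
    MinimalWithDescents d σ ↔
      descNum σ = d ∧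
        ∀ (i : ℕ) (hi : i + 1 < n),
          σ ⟨i, Nat.lt_of_succ_lt hi⟩ < σ ⟨i + 1, hi⟩ →
          ∃ (h1 : 1 ≤ i) (h2 : i + 2 < n),
            σ ⟨i, Nat.lt_of_succ_lt hi⟩ < σ ⟨i - 1, by omega⟩ ∧
            σ ⟨i + 2, h2⟩ < σ ⟨i + 1, hi⟩ ∧
            σ ⟨i - 1, by omega⟩ < σ ⟨i + 1, hi⟩ ∧
            σ ⟨i, Nat.lt_of_succ_lt hi⟩ < σ ⟨i + 2, h2⟩ := by
  constructor
  · rintro ⟨hdn, hmin⟩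
    refine ⟨hdn, ?_⟩
    intro i hi hasc
    rcases n with _ | m
    · omega
    have hmin' : ∀ p : Fin (m+1), descNum (del σ p) < d := fun p =>
      hmin m (del σ p) (Nat.lt_succ_self m) (del_isPattern σ p)
    have hcontra : ∀ p : Fin (m+1),
        descNum σ ≤ descNum (del σ p) → False := by
      intro p hle
      have := hmin' p
      omega
    have hnDi : ¬ IsDescentAt σ i := not_descent_of_ascent σ i hi hasc
    have h1 : 1 ≤ i := by
      by_contra h
      obtain ⟨p, hpv⟩ : ∃ p : Fin (m+1), p.val = 0 := ⟨⟨0, by omega⟩, rfl⟩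
      refine hcontra p (LB σ p ?_ ?_)
      · rintro ⟨-, hA⟩
        rw [hpv, show (0:ℕ) = i by omega] at hA
        exact hnDi hA
      · intro _ h1p
        omega
    have h2 : i + 2 < m + 1 := by
      by_contra h
      obtain ⟨p, hpv⟩ : ∃ p : Fin (m+1), p.val = m := ⟨⟨m, by omega⟩, rfl⟩
      refine hcontra p (LB σ p ?_ ?_)
      · rintro ⟨hA, -⟩
        rw [hpv, show m - 1 = i by omega] at hA
        exact hnDi hA
      · rintro (hA | hA) _
        · rw [hpv, show m - 1 = i by omega] at hA
          exact absurd hA hnDi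
        · rw [hpv] at hA
          exact absurd (show IsDescentAt σ m from hA).choose (by omega)
    have c1 : IsDescentAt σ (i - 1) := by
      by_contra h
      obtain ⟨p, hpv⟩ : ∃ p : Fin (m+1), p.val = i := ⟨⟨i, by omega⟩, rfl⟩
      refine hcontra p (LB σ p ?_ ?_)
      · rintro ⟨hA, -⟩
        rw [hpv] at hA
        exact h hA
      · rintro (hA | hA) _
        · rw [hpv] at hA
          exact absurd hA h
        · rw [hpv] at hA
          exact absurd hA hnDi
    have c2 : IsDescentAt σ (i + 1) := by
      by_contra h
      obtain ⟨p, hpv⟩ : ∃ p : Fin (m+1), p.val = i + 1 := ⟨⟨i + 1, by omega⟩, rfl⟩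
      refine hcontra p (LB σ p ?_ ?_)
      · rintro ⟨hA, -⟩
        rw [hpv, show i + 1 - 1 = i from rfl] at hA
        exact hnDi hA
      · rintro (hA | hA) _
        · rw [hpv, show i + 1 - 1 = i from rfl] at hA
          exact absurd hA hnDi
        · rw [hpv] at hA
          exact absurd hA h
    have c3 : σ ⟨i - 1, by omega⟩ < σ ⟨i + 1, hi⟩ := by
      by_contra h
      have hne : σ ⟨i + 1, hi⟩ ≠ σ ⟨i - 1, by omega⟩ :=
        σ.injective.ne (by simp [Fin.ext_iff]; omega)
      have hlt : σ ⟨i + 1, hi⟩ < σ ⟨i - 1, by omega⟩ :=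
        lt_of_le_of_ne (not_lt.1 h) hne
      obtain ⟨p, hpv⟩ : ∃ p : Fin (m+1), p.val = i := ⟨⟨i, by omega⟩, rfl⟩
      refine hcontra p (LB σ p ?_ ?_)
      · rintro ⟨-, hA⟩
        rw [hpv] at hA
        exact hnDi hA
      · intro _ _
        have hplt : p.val < m := by omega
        refine ⟨hplt, ?_⟩
        have e1 : (⟨p.val + 1, by omega⟩ : Fin (m+1)) = ⟨i + 1, hi⟩ :=
          Fin.ext (by simp [hpv])
        have e2 : (⟨p.val - 1, by omega⟩ : Fin (m+1)) = ⟨i - 1, by omega⟩ :=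
          Fin.ext (by simp [hpv])
        rw [show (⟨p.val + 1, Nat.succ_lt_succ hplt⟩ : Fin (m+1))
          = ⟨p.val + 1, by omega⟩ from rfl]
        rw [e1, e2]
        exact hlt
    have c4 : σ ⟨i, Nat.lt_of_succ_lt hi⟩ < σ ⟨i + 2, h2⟩ := by
      by_contra h
      have hne : σ ⟨i + 2, h2⟩ ≠ σ ⟨i, Nat.lt_of_succ_lt hi⟩ :=
        σ.injective.ne (by simp [Fin.ext_iff])
      have hlt : σ ⟨i + 2, h2⟩ < σ ⟨i, Nat.lt_of_succ_lt hi⟩ :=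
        lt_of_le_of_ne (not_lt.1 h) hne
      obtain ⟨p, hpv⟩ : ∃ p : Fin (m+1), p.val = i + 1 := ⟨⟨i + 1, by omega⟩, rfl⟩
      refine hcontra p (LB σ p ?_ ?_)
      · rintro ⟨hA, -⟩
        rw [hpv, show i + 1 - 1 = i from rfl] at hA
        exact hnDi hA
      · intro _ _
        have hplt : p.val < m := by omega
        refine ⟨hplt, ?_⟩
        have e1 : (⟨p.val + 1, by omega⟩ : Fin (m+1)) = ⟨i + 2, h2⟩ :=
          Fin.ext (by simp [hpv])
        have e2 : (⟨p.val - 1, by omega⟩ : Fin (m+1)) = ⟨i, Nat.lt_of_succ_lt hi⟩ :=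
          Fin.ext (by simp [hpv])
        rw [show (⟨p.val + 1, Nat.succ_lt_succ hplt⟩ : Fin (m+1))
          = ⟨p.val + 1, by omega⟩ from rfl]
        rw [e1, e2]
        exact hlt
    obtain ⟨hd1, hlt1⟩ := c1
    obtain ⟨hd2, hlt2⟩ := c2
    refine ⟨h1, h2, ?_, ?_, c3, c4⟩
    · have e : (⟨i - 1 + 1, hd1⟩ : Fin (m+1)) = ⟨i, Nat.lt_of_succ_lt hi⟩ :=
        Fin.ext (by simp; omega)
      rwa [e] at hlt1
    · exact hlt2
  · rintro ⟨hdn, hcond⟩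
    refine ⟨hdn, ?_⟩
    intro k π hk hpat
    rcases n with _ | m
    · omega
    obtain ⟨p, hp⟩ := pattern_factor π σ hk hpat
    exact lt_of_le_of_lt (pattern_desc_le π (del σ p) hp) (UB σ hd hdn hcond p)
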